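/- Combining maximality of augmenting sets with the distance bound: if S ∈ I1 ∩ I2 has no augmenting path of length 2 (i.e., S is maximal), Π is a maximal augmenting set in G(S) (where shortest augmenting paths have length 4), then |S ⊕ Π| ≥ (2/3)·r, where r is the maximum size of a common independent set. -/

import Mathlib

open Set

variable {α : Type*}

/-- Vertices of the exchange graph: `Sum.inl v` is an element of the ground set,
`Sum.inr false` is the source `s`, `Sum.inr true` is the sink `t`. -/
abbrev ExV (α : Type*) := α ⊕ Bool

/-- Adjacency in the exchange graph `G(S)` of the common independent set `S`. -/
def exAdj (M₁ M₂ : Matroid α) (S : Set α) : ExV α → ExV α → Prop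
  | Sum.inl u, Sum.inl v =>
      (u ∈ S ∧ v ∉ S ∧ M₁.Indep (insert v (S \ {u}))) ∨
      (u ∉ S ∧ v ∈ S ∧ M₂.Indep (insert u (S \ {v})))
  | Sum.inr false, Sum.inl v => v ∉ S ∧ M₁.Indep (insert v S)
  | Sum.inl v, Sum.inr true => v ∉ S ∧ M₂.Indep (insert v S)
  | _, _ => False

/-- `l` is an `(s,t)`-path (list of vertices) in the exchange graph `G(S)`.
Its length (number of edges) is `l.length - 1`. -/
def IsSTPath (M₁ M₂ : Matroid α) (S : Set α) (l : List (ExV α)) : Prop :=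
  l.Chain' (exAdj M₁ M₂ S) ∧ l.head? = some (Sum.inr false) ∧
    l.getLast? = some (Sum.inr true)

/-- `l` is a path from `s` to the element `v` in the exchange graph `G(S)`. -/
def IsSPathTo (M₁ M₂ : Matroid α) (S : Set α) (v : α) (l : List (ExV α)) : Prop :=
  l.Chain' (exAdj M₁ M₂ S) ∧ l.head? = some (Sum.inr false) ∧
    l.getLast? = some (Sum.inl v)

/-- `v` is at distance exactly `i` from `s` in the exchange graph `G(S)`;
i.e. `v ∈ D_i`. -/
def InLayer (M₁ M₂ : Matroid α) (S : Set α) (i : ℕ) (v : α) : Prop :=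
  (∃ l, IsSPathTo M₁ M₂ S v l ∧ l.length = i + 1) ∧
    ∀ l, IsSPathTo M₁ M₂ S v l → i + 1 ≤ l.length

/-- Shortest `(s,t)`-paths in `G(S)` have length exactly `4`. -/
def ShortestAugLenFour (M₁ M₂ : Matroid α) (S : Set α) : Prop :=
  (∃ l, IsSTPath M₁ M₂ S l ∧ l.length = 5) ∧
    ∀ l, IsSTPath M₁ M₂ S l → 5 ≤ l.length

/-- `(B₁, A₁, B₂)` is an augmenting set in `G(S)`. -/
def IsAugSet (M₁ M₂ : Matroid α) (S B₁ A₁ B₂ : Set α) : Prop :=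
  (∀ v ∈ B₁, InLayer M₁ M₂ S 1 v) ∧ (∀ v ∈ A₁, InLayer M₁ M₂ S 2 v) ∧
  (∀ v ∈ B₂, InLayer M₁ M₂ S 3 v) ∧
  B₁.ncard = A₁.ncard ∧ A₁.ncard = B₂.ncard ∧
  M₁.Indep (S ∪ B₁) ∧ M₂.Indep ((S ∪ B₁) \ A₁) ∧
  M₁.Indep ((S \ A₁) ∪ B₂) ∧ M₂.Indep (S ∪ B₂)

lemma indep_encard_le_of_subset_closure {M : Matroid α} {I Z : Set α}
    (hI : M.Indep I) (hIZ : I ⊆ M.closure Z) (hZE : Z ⊆ M.E) :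
    I.encard ≤ Z.encard := by
  obtain ⟨B, hB⟩ := M.exists_isBasis Z hZE
  refine le_trans ?_ (Set.encard_le_encard hB.subset)
  by_contra h
  push_neg at h
  obtain ⟨e, heIB, hins⟩ := hB.indep.augment hI h
  have heB : e ∈ M.closure B := by rw [hB.closure_eq_closure]; exact hIZ heIB.1
  rw [hB.indep.insert_indep_iff_of_notMem heIB.2] at hins
  exact hins.2 heB

lemma closure_eq_closure_of_subset_closure {M : Matroid α} {X Y : Set α}
    (hX : M.Indep X) (hY : M.Indep Y) (hXY : X ⊆ M.closure Y)
    (hcard : Y.encard ≤ X.encard) (hYfin : Y.Finite) :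
    M.closure X = M.closure Y := by
  have hle : X.encard ≤ Y.encard :=
    indep_encard_le_of_subset_closure hX hXY hY.subset_ground
  have hXfin : X.Finite := by
    rw [← Set.encard_lt_top_iff]
    exact lt_of_le_of_lt hle hYfin.encard_lt_top
  have hYX : Y ⊆ M.closure X := by
    intro y hy
    by_contra hyX
    have hyX' : y ∉ X := fun h => hyX (M.subset_closure X hX.subset_ground h)
    have hins : M.Indep (insert y X) := by
      rw [hX.insert_indep_iff_of_notMem hyX']
      exact ⟨hY.subset_ground hy, hyX⟩
    have h2 : insert y X ⊆ M.closure Y :=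
      insert_subset (M.subset_closure Y hY.subset_ground hy) hXY
    have h3 := indep_encard_le_of_subset_closure hins h2 hY.subset_ground
    rw [Set.encard_insert_of_notMem hyX'] at h3
    have h4 : X.encard + 1 ≤ X.encard := h3.trans hcard
    have := (ENat.add_one_le_iff hXfin.encard_lt_top.ne).mp h4
    exact this.false
  exact (M.closure_subset_closure_of_subset_closure hXY).antisymm
    (M.closure_subset_closure_of_subset_closure hYX)

lemma indep_union_of_closure_eq {M : Matroid α} {X Y Z : Set α}
    (hYZ : M.Indep (Y ∪ Z)) (hX : M.Indep X) (hcl : M.closure X = M.closure Y)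
    (hdisj : Y ∩ Z = ∅) : M.Indep (X ∪ Z) := by
  have hZE : Z ⊆ M.E := (subset_union_right).trans hYZ.subset_ground
  obtain ⟨B, hB, hXB⟩ := hX.subset_isBasis_of_subset (subset_union_left (s := X) (t := Z))
    (union_subset hX.subset_ground hZE)
  have hZB : Z ⊆ B := by
    intro z hz
    by_contra hzB
    have hzY : z ∉ Y := fun h => by
      have h0 : z ∈ Y ∩ Z := ⟨h, hz⟩
      rw [hdisj] at h0
      exact h0
    have hzcl : z ∈ M.closure B := hB.subset_closure (Or.inr hz)
    have hBsub : B ⊆ M.closure (Y ∪ (Z \ {z})) := by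
      intro b hb
      rcases hB.subset hb with hbX | hbZ
      · have : b ∈ M.closure Y := by
          rw [← hcl]; exact M.subset_closure X hX.subset_ground hbX
        exact M.closure_subset_closure subset_union_left this
      · have hsubE : Y ∪ (Z \ {z}) ⊆ M.E :=
          union_subset (subset_union_left.trans hYZ.subset_ground)
            ((diff_subset.trans subset_union_right).trans hYZ.subset_ground)
        exact M.subset_closure _ hsubE (Or.inr ⟨hbZ, fun hzb => hzB (hzb ▸ hb)⟩)
    have hcl2 : z ∈ M.closure (Y ∪ (Z \ {z})) :=
      M.closure_subset_closure_of_subset_closure hBsub hzcl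
    have hset : Y ∪ (Z \ {z}) = (Y ∪ Z) \ {z} := by
      ext w
      simp only [mem_union, mem_diff, mem_singleton_iff]
      constructor
      · rintro (hw | ⟨hw, hne⟩)
        · exact ⟨Or.inl hw, fun he => hzY (he ▸ hw)⟩
        · exact ⟨Or.inr hw, hne⟩
      · rintro ⟨hw | hw, hne⟩
        · exact Or.inl hw
        · exact Or.inr ⟨hw, hne⟩
    rw [hset] at hcl2
    exact hYZ.notMem_closure_diff_of_mem (Or.inr hz) hcl2
  exact hB.indep.subset (union_subset hXB hZB)

lemma mem_closure_support {M : Matroid α} {T : Set α} {x : α}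
    (hT : M.Indep T) (hfin : T.Finite) (hx : x ∈ M.closure T) :
    x ∈ M.closure {y | y ∈ T ∧ x ∉ M.closure (T \ {y})} := by
  have key : ∀ n (J : Set α), J ⊆ T → J.ncard = n → x ∈ M.closure J →
      x ∈ M.closure {y | y ∈ T ∧ x ∉ M.closure (T \ {y})} := by
    intro n
    induction n using Nat.strong_induction_on with
    | _ n ih =>
      intro J hJT hJn hxJ
      by_cases hJN : J ⊆ {y | y ∈ T ∧ x ∉ M.closure (T \ {y})}
      · exact M.closure_subset_closure hJN hxJ
      · obtain ⟨y, hyJ, hyN⟩ := not_subset.mp hJN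
        have hyT := hJT hyJ
        have hxTy : x ∈ M.closure (T \ {y}) := by
          simp only [mem_setOf_eq] at hyN
          by_contra hc
          exact hyN ⟨hyT, hc⟩
        have hxJy : x ∈ M.closure (J \ {y}) := by
          by_contra hcon
          have hexch : y ∈ M.closure (insert x (J \ {y})) := by
            refine Matroid.mem_closure_insert hcon ?_
            rwa [insert_diff_singleton, insert_eq_of_mem hyJ]
          have hsub : insert x (J \ {y}) ⊆ M.closure (T \ {y}) := by
            refine insert_subset hxTy ?_
            intro b hb
            exact M.subset_closure _ (diff_subset.trans hT.subset_ground)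
              (diff_subset_diff_left hJT hb)
          have hyTcl : y ∈ M.closure (T \ {y}) :=
            M.closure_subset_closure_of_subset_closure hsub hexch
          exact hT.notMem_closure_diff_of_mem hyT hyTcl
        have hJfin : J.Finite := hfin.subset hJT
        have hlt : (J \ {y}).ncard < n :=
          hJn ▸ Set.ncard_diff_singleton_lt_of_mem hyJ hJfin
        exact ih _ hlt (J \ {y}) (diff_subset.trans hJT) rfl hxJy
  exact key T.ncard T subset_rfl rfl hx

variable {M₁ M₂ : Matroid α} {S : Set α} {v : α} {l : List (α ⊕ Bool)}

lemma path_len_ge_two (h : IsSPathTo M₁ M₂ S v l) : 2 ≤ l.length := by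
  obtain ⟨hc, hh, hg⟩ := h
  match l with
  | [] => simp at hh
  | [a] =>
    simp only [List.head?_cons, Option.some_inj] at hh
    simp only [List.getLast?_singleton, Option.some_inj] at hg
    rw [hh] at hg; exact absurd hg (by simp)
  | a :: b :: t => simp [List.length]

lemma path_len_two (h : IsSPathTo M₁ M₂ S v l) (hl : l.length = 2) :
    v ∉ S ∧ M₁.Indep (insert v S) := by
  obtain ⟨hc, hh, hg⟩ := h
  match l with
  | [a, b] =>
    simp only [List.head?_cons, Option.some_inj] at hh
    have hgb : b = Sum.inl v := by
      simpa [List.getLast?] using hg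
    subst hh hgb
    have := List.isChain_cons_cons.mp hc
    exact this.1

lemma path_len_three (h : IsSPathTo M₁ M₂ S v l) (hl : l.length = 3) :
    ∃ u, u ∉ S ∧ M₁.Indep (insert u S) ∧ v ∈ S ∧ M₂.Indep (insert u (S \ {v})) := by
  obtain ⟨hc, hh, hg⟩ := h
  match l with
  | [a, b, c] =>
    simp only [List.head?_cons, Option.some_inj] at hh
    have hgc : c = Sum.inl v := by simpa [List.getLast?] using hg
    subst hh hgc
    simp only [List.Chain', List.isChain_cons_cons] at hc
    obtain ⟨h1, h2, -⟩ := hc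
    match b with
    | Sum.inl u =>
      obtain ⟨hu1, hu2⟩ := h1
      rcases h2 with ⟨huS, -⟩ | ⟨-, hvS, hind⟩
      · exact absurd huS hu1
      · exact ⟨u, hu1, hu2, hvS, hind⟩
    | Sum.inr b' => exact absurd h1 (by cases b' <;> simp [exAdj])

lemma path_len_four (h : IsSPathTo M₁ M₂ S v l) (hl : l.length = 4) : v ∉ S := by
  obtain ⟨hc, hh, hg⟩ := h
  match l with
  | [a, b, c, d] =>
    simp only [List.head?_cons, Option.some_inj] at hh
    have hgd : d = Sum.inl v := by simpa [List.getLast?] using hg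
    subst hh hgd
    simp only [List.Chain', List.isChain_cons_cons] at hc
    obtain ⟨h1, h2, h3, -⟩ := hc
    match b with
    | Sum.inr b' => exact absurd h1 (by cases b' <;> simp [exAdj])
    | Sum.inl u =>
      obtain ⟨hu1, -⟩ := h1
      match c with
      | Sum.inr false => exact absurd h2 (by simp [exAdj])
      | Sum.inr true => exact absurd h3 (by simp [exAdj])
      | Sum.inl w =>
        rcases h2 with ⟨huS, -⟩ | ⟨-, hwS, -⟩
        · exact absurd huS hu1
        · rcases h3 with ⟨-, hv, -⟩ | ⟨hw, -⟩
          · exact hv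
          · exact absurd hwS hw

lemma inLayer_one_iff : InLayer M₁ M₂ S 1 v ↔ v ∉ S ∧ M₁.Indep (insert v S) := by
  constructor
  · rintro ⟨⟨l, hl, hlen⟩, -⟩
    exact path_len_two hl hlen
  · rintro ⟨hvS, hind⟩
    refine ⟨⟨[Sum.inr false, Sum.inl v], ⟨?_, rfl, ?_⟩, rfl⟩, fun l hl => path_len_ge_two hl⟩
    · simp only [List.Chain', List.isChain_cons_cons]
      exact ⟨⟨hvS, hind⟩, List.isChain_singleton _⟩
    · simp [List.getLast?]

lemma inLayer_two_mem (h : InLayer M₁ M₂ S 2 v) : v ∈ S := by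
  obtain ⟨⟨l, hl, hlen⟩, -⟩ := h
  obtain ⟨u, -, -, hvS, -⟩ := path_len_three hl hlen
  exact hvS

lemma inLayer_two_of {x : α} (hvS : v ∈ S) (hx : x ∉ S) (hx1 : M₁.Indep (insert x S))
    (hx2 : M₂.Indep (insert x (S \ {v}))) : InLayer M₁ M₂ S 2 v := by
  constructor
  · refine ⟨[Sum.inr false, Sum.inl x, Sum.inl v], ⟨?_, rfl, ?_⟩, rfl⟩
    · simp only [List.Chain', List.isChain_cons_cons]
      exact ⟨⟨hx, hx1⟩, Or.inr ⟨hx, hvS, hx2⟩, List.isChain_singleton _⟩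
    · simp [List.getLast?]
  · intro l hl
    have h2 := path_len_ge_two hl
    rcases Nat.lt_or_ge l.length 3 with h | h
    · have : l.length = 2 := by omega
      exact absurd hvS (path_len_two hl this).1
    · exact h

lemma inLayer_three_not_mem (h : InLayer M₁ M₂ S 3 v) : v ∉ S := by
  obtain ⟨⟨l, hl, hlen⟩, -⟩ := h
  exact path_len_four hl hlen

lemma inLayer_three_not_indep (h : InLayer M₁ M₂ S 3 v) : ¬ M₁.Indep (insert v S) := by
  intro hind
  have hvS := inLayer_three_not_mem h
  have hpath : IsSPathTo M₁ M₂ S v [Sum.inr false, Sum.inl v] := by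
    refine ⟨?_, rfl, by simp [List.getLast?]⟩
    simp only [List.Chain', List.isChain_cons_cons]
    exact ⟨⟨hvS, hind⟩, List.isChain_singleton _⟩
  have := h.2 _ hpath
  simp at this

lemma inLayer_three_of {y : α} (hvS : v ∉ S) (hvind : ¬ M₁.Indep (insert v S))
    (hyS : y ∈ S) (hy : InLayer M₁ M₂ S 2 y) (hind : M₁.Indep (insert v (S \ {y}))) :
    InLayer M₁ M₂ S 3 v := by
  obtain ⟨⟨l, hl, hlen⟩, -⟩ := hy
  obtain ⟨u, hu1, hu2, -, hu3⟩ := path_len_three hl hlen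
  constructor
  · refine ⟨[Sum.inr false, Sum.inl u, Sum.inl y, Sum.inl v], ⟨?_, rfl, ?_⟩, rfl⟩
    · simp only [List.Chain', List.isChain_cons_cons]
      exact ⟨⟨hu1, hu2⟩, Or.inr ⟨hu1, hyS, hu3⟩, Or.inl ⟨hyS, hvS, hind⟩,
        List.isChain_singleton _⟩
    · simp [List.getLast?]
  · intro l' hl'
    have h2 := path_len_ge_two hl'
    rcases Nat.lt_or_ge l'.length 4 with h | h
    · interval_cases hlen' : l'.length
      · exact absurd (path_len_two hl' hlen').2 hvind
      · obtain ⟨u', -, -, hvS', -⟩ := path_len_three hl' hlen'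
        exact absurd hvS' hvS
    · exact h

lemma layer_unique {i j : ℕ} (hi : InLayer M₁ M₂ S i v) (hj : InLayer M₁ M₂ S j v) :
    i = j := by
  obtain ⟨⟨li, hli, hleni⟩, hmini⟩ := hi
  obtain ⟨⟨lj, hlj, hlenj⟩, hminj⟩ := hj
  have h1 := hmini _ hlj
  have h2 := hminj _ hli
  omega
/-- If `S` is a maximal common independent set whose exchange graph has shortest
`(s,t)`-path length exactly `4`, and `Π` is a maximal augmenting set in `G(S)`,
then `|S ⊕ Π| ≥ (2/3) r`. -/
theorem maximal_augset_two_thirds {α : Type*} (M₁ M₂ : Matroid α)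
    (hE : M₂.E = M₁.E) (hfin : M₁.E.Finite)
    (S : Set α) (hS₁ : M₁.Indep S) (hS₂ : M₂.Indep S)
    (hSmax : ∀ v, M₁.Indep (insert v S) → M₂.Indep (insert v S) → v ∈ S)
    (hlen : ShortestAugLenFour M₁ M₂ S)
    (B₁ A₁ B₂ : Set α) (haug : IsAugSet M₁ M₂ S B₁ A₁ B₂)
    (hmax : ∀ B₁' A₁' B₂', IsAugSet M₁ M₂ S B₁' A₁' B₂' →
      B₁ ⊆ B₁' → A₁ ⊆ A₁' → B₂ ⊆ B₂' → B₁' = B₁ ∧ A₁' = A₁ ∧ B₂' = B₂)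
    (r : ℕ) (hr : IsGreatest {n | ∃ T, M₁.Indep T ∧ M₂.Indep T ∧ T.ncard = n} r) :
    (2 / 3 : ℚ) * r ≤ ((S ∪ B₁ ∪ B₂) \ A₁).ncard := by
  classical
  obtain ⟨hB₁L, hA₁L, hB₂L, hc₁, hc₂, hI1, hI2, hI3, hI4⟩ := haug
  clear hlen
  -- ground set and membership facts
  have hSE₁ : S ⊆ M₁.E := hS₁.subset_ground
  have hSE₂ : S ⊆ M₂.E := hS₂.subset_ground
  have hB₁E : B₁ ⊆ M₁.E := subset_union_right.trans hI1.subset_ground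
  have hB₂E : B₂ ⊆ M₁.E := subset_union_right.trans hI3.subset_ground
  have hB₁S : ∀ v ∈ B₁, v ∉ S ∧ M₁.Indep (insert v S) :=
    fun v hv => inLayer_one_iff.mp (hB₁L v hv)
  have hA₁S : A₁ ⊆ S := fun v hv => inLayer_two_mem (hA₁L v hv)
  have hB₂S : ∀ v ∈ B₂, v ∉ S := fun v hv => inLayer_three_not_mem (hB₂L v hv)
  have hB₂ni : ∀ v ∈ B₂, ¬ M₁.Indep (insert v S) :=
    fun v hv => inLayer_three_not_indep (hB₂L v hv)
  have hxB₁ : ∀ {v}, v ∈ B₁ → v ∉ S := fun h => (hB₁S _ h).1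
  have hB₁B₂ : ∀ v, v ∈ B₁ → v ∈ B₂ → False := fun v h1 h2 => by
    have := layer_unique (hB₁L v h1) (hB₂L v h2); omega
  -- closure facts
  have hB₁cl : B₁ ⊆ M₂.closure S := by
    intro v hv
    obtain ⟨hvS, hvi⟩ := hB₁S v hv
    by_contra hcl
    have h2 : M₂.Indep (insert v S) := by
      rw [hS₂.insert_indep_iff_of_notMem hvS]
      exact ⟨hE ▸ hB₁E hv, hcl⟩
    exact hvS (hSmax v hvi h2)
  have hB₂cl : B₂ ⊆ M₁.closure S := by
    intro v hv
    by_contra hcl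
    exact hB₂ni v hv (by
      rw [hS₁.insert_indep_iff_of_notMem (hB₂S v hv)]
      exact ⟨hB₂E hv, hcl⟩)
  -- finiteness
  have hSfin : S.Finite := hfin.subset hSE₁
  have hA₁fin : A₁.Finite := hSfin.subset hA₁S
  have hB₁fin : B₁.Finite := hfin.subset hB₁E
  have hB₂fin : B₂.Finite := hfin.subset hB₂E
  -- P and Q
  set P := (S \ A₁) ∪ B₂ with hPdef
  set Q := (S \ A₁) ∪ B₁ with hQdef
  have e1 : (S ∪ B₁) \ A₁ = Q := by
    ext v
    simp only [hQdef, mem_diff, mem_union]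
    constructor
    · rintro ⟨h1 | h1, h2⟩
      exacts [Or.inl ⟨h1, h2⟩, Or.inr h1]
    · rintro (⟨h1, h2⟩ | h1)
      exacts [⟨Or.inl h1, h2⟩, ⟨Or.inr h1, fun h => hxB₁ h1 (hA₁S h)⟩]
  have e2 : (S ∪ B₁ ∪ B₂) \ A₁ = P ∪ B₁ := by
    ext v
    simp only [hPdef, mem_diff, mem_union]
    constructor
    · rintro ⟨(h1 | h1) | h1, h2⟩
      exacts [Or.inl (Or.inl ⟨h1, h2⟩), Or.inr h1, Or.inl (Or.inr h1)]
    · rintro ((⟨h1, h2⟩ | h1) | h1)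
      exacts [⟨Or.inl (Or.inl h1), h2⟩,
        ⟨Or.inr h1, fun h => hB₂S v h1 (hA₁S h)⟩,
        ⟨Or.inl (Or.inr h1), fun h => hxB₁ h1 (hA₁S h)⟩]
  have e3 : Q ∪ B₂ = P ∪ B₁ := by
    ext v
    simp only [hPdef, hQdef, mem_union]
    tauto
  have hQindep : M₂.Indep Q := e1 ▸ hI2
  have hPindep : M₁.Indep P := hI3
  -- cardinalities
  have hSAfin : (S \ A₁).Finite := hSfin.diff
  have hPfin : P.Finite := hSAfin.union hB₂fin
  have hQfin : Q.Finite := hSAfin.union hB₁fin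
  have hdSB₁ : Disjoint (S \ A₁) B₁ := disjoint_left.mpr fun a ha hb => hxB₁ hb ha.1
  have hdSB₂ : Disjoint (S \ A₁) B₂ := disjoint_left.mpr fun a ha hb => hB₂S a hb ha.1
  have hA₁le : A₁.ncard ≤ S.ncard := ncard_le_ncard hA₁S hSfin
  have hSAcard : (S \ A₁).ncard = S.ncard - A₁.ncard := ncard_diff hA₁S hA₁fin
  have hQcard : Q.ncard = S.ncard := by
    rw [hQdef, ncard_union_eq hdSB₁ hSAfin hB₁fin, hSAcard]
    omega
  have hPcard : P.ncard = S.ncard := by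
    rw [hPdef, ncard_union_eq hdSB₂ hSAfin hB₂fin, hSAcard]
    omega
  have hQenc : Q.encard = S.encard := by
    rw [← hQfin.cast_ncard_eq, ← hSfin.cast_ncard_eq, hQcard]
  have hPenc : P.encard = S.encard := by
    rw [← hPfin.cast_ncard_eq, ← hSfin.cast_ncard_eq, hPcard]
  -- closures of P and Q
  have hclP : M₁.closure P = M₁.closure S :=
    closure_eq_closure_of_subset_closure hPindep hS₁
      (union_subset (diff_subset.trans (M₁.subset_closure S hSE₁)) hB₂cl)
      (le_of_eq hPenc.symm) hSfin
  have hclQ : M₂.closure Q = M₂.closure S :=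
    closure_eq_closure_of_subset_closure hQindep hS₂
      (union_subset (diff_subset.trans (M₂.subset_closure S hSE₂)) hB₁cl)
      (le_of_eq hQenc.symm) hSfin
  have hSB₁ : S ∩ B₁ = ∅ := Set.eq_empty_iff_forall_notMem.mpr fun v hv => hxB₁ hv.2 hv.1
  have hSB₂ : S ∩ B₂ = ∅ := Set.eq_empty_iff_forall_notMem.mpr fun v hv => hB₂S v hv.2 hv.1
  -- T = S ⊕ Π is common independent
  have hT₁ : M₁.Indep (P ∪ B₁) := indep_union_of_closure_eq hI1 hPindep hclP hSB₁
  have hT₂ : M₂.Indep (P ∪ B₁) := e3 ▸ indep_union_of_closure_eq hI4 hQindep hclQ hSB₂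
  rw [e2]
  set T := P ∪ B₁ with hTdef
  have hTE₁ : T ⊆ M₁.E := hT₁.subset_ground
  have hTE₂ : T ⊆ M₂.E := hT₂.subset_ground
  have hTfin : T.Finite := hfin.subset hTE₁
  have hclT₁ : M₁.closure T = M₁.closure (S ∪ B₁) := by
    calc M₁.closure (P ∪ B₁) = M₁.closure (M₁.closure P ∪ B₁) :=
          (M₁.closure_union_closure_left_eq _ _).symm
      _ = M₁.closure (M₁.closure S ∪ B₁) := by rw [hclP]
      _ = M₁.closure (S ∪ B₁) := M₁.closure_union_closure_left_eq _ _
  have hclT₂ : M₂.closure T = M₂.closure (S ∪ B₂) := by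
    rw [← e3]
    calc M₂.closure (Q ∪ B₂) = M₂.closure (M₂.closure Q ∪ B₂) :=
          (M₂.closure_union_closure_left_eq _ _).symm
      _ = M₂.closure (M₂.closure S ∪ B₂) := by rw [hclQ]
      _ = M₂.closure (S ∪ B₂) := M₂.closure_union_closure_left_eq _ _
  have hScl₁T : S ⊆ M₁.closure T := by
    rw [hclT₁]
    exact fun v hv => M₁.subset_closure _ hI1.subset_ground (Or.inl hv)
  have hScl₂T : S ⊆ M₂.closure T := by
    rw [hclT₂]
    exact fun v hv => M₂.subset_closure _ hI4.subset_ground (Or.inl hv)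
  have hcl₁ST : M₁.closure S ⊆ M₁.closure T := by
    rw [hclT₁]; exact M₁.closure_subset_closure subset_union_left
  have hcl₂ST : M₂.closure S ⊆ M₂.closure T := by
    rw [hclT₂]; exact M₂.closure_subset_closure subset_union_left
  -- (i) : T is a maximal common independent set
  have hTmax : ∀ v, v ∉ T → M₁.Indep (insert v T) → M₂.Indep (insert v T) → False := by
    intro v hvT h1 h2
    have hvE : v ∈ M₁.E := h1.subset_ground (mem_insert v T)
    have hv1 : v ∉ M₁.closure T := ((hT₁.insert_indep_iff_of_notMem hvT).mp h1).2
    have hv2 : v ∉ M₂.closure T := ((hT₂.insert_indep_iff_of_notMem hvT).mp h2).2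
    have hvS : v ∉ S := fun h => hv1 (hScl₁T h)
    have hvi₁ : M₁.Indep (insert v S) := by
      rw [hS₁.insert_indep_iff_of_notMem hvS]
      exact ⟨hvE, fun h => hv1 (hcl₁ST h)⟩
    have hvni₂ : ¬ M₂.Indep (insert v S) := fun h => hvS (hSmax v hvi₁ h)
    rw [hS₂.insert_indep_iff_of_notMem hvS] at hvni₂
    simp only [mem_diff, not_and, not_not] at hvni₂
    exact hv2 (hcl₂ST (hvni₂ (hE ▸ hvE)))
  -- (ii) : no augmenting path of length 4 in G(T)
  have hTpath : ∀ x y x', x ∉ T → x' ∉ T → y ∈ T → M₁.Indep (insert x T) →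
      M₂.Indep (insert x (T \ {y})) → M₁.Indep (insert x' (T \ {y})) →
      M₂.Indep (insert x' T) → False := by
    intro x y x' hxT hx'T hyT h1 h2 h3 h4
    -- properties of x
    have hxE : x ∈ M₁.E := h1.subset_ground (mem_insert x T)
    have hx1cl : x ∉ M₁.closure T := ((hT₁.insert_indep_iff_of_notMem hxT).mp h1).2
    have hxS : x ∉ S := fun h => hx1cl (hScl₁T h)
    have hxi₁ : M₁.Indep (insert x S) := by
      rw [hS₁.insert_indep_iff_of_notMem hxS]
      exact ⟨hxE, fun h => hx1cl (hcl₁ST h)⟩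
    have hxcl₂ : x ∈ M₂.closure S := by
      have hvni₂ : ¬ M₂.Indep (insert x S) := fun h => hxS (hSmax x hxi₁ h)
      rw [hS₂.insert_indep_iff_of_notMem hxS] at hvni₂
      simp only [mem_diff, not_and, not_not] at hvni₂
      exact hvni₂ (hE ▸ hxE)
    -- properties of x'
    have hx'E : x' ∈ M₂.E := h4.subset_ground (mem_insert x' T)
    have hx'2cl : x' ∉ M₂.closure T := ((hT₂.insert_indep_iff_of_notMem hx'T).mp h4).2
    have hx'S : x' ∉ S := fun h => hx'2cl (hScl₂T h)
    have hx'i₂ : M₂.Indep (insert x' S) := by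
      rw [hS₂.insert_indep_iff_of_notMem hx'S]
      exact ⟨hx'E, fun h => hx'2cl (hcl₂ST h)⟩
    have hx'ni₁ : ¬ M₁.Indep (insert x' S) := fun h => hx'S (hSmax x' h hx'i₂)
    have hx'E₁ : x' ∈ M₁.E := hE ▸ hx'E
    have hx'cl₁ : x' ∈ M₁.closure S := by
      have := hx'ni₁
      rw [hS₁.insert_indep_iff_of_notMem hx'S] at this
      simp only [mem_diff, not_and, not_not] at this
      exact this hx'E₁
    -- y ∈ S \ A₁
    have hQT : Q ⊆ T := by
      rw [hTdef, hPdef, hQdef]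
      exact union_subset (subset_union_left.trans' subset_union_left) subset_union_right
    have hyB₂ : y ∉ B₂ := by
      intro hy
      have hQTy : Q ⊆ T \ {y} := fun v hv => ⟨hQT hv,
        fun hvy => (by
          rcases hv with hv | hv
          · exact hB₂S y hy (hvy ▸ hv.1)
          · exact hB₁B₂ v hv (hvy ▸ hy))⟩
      have hxQ : x ∉ Q := fun h => hxT (hQT h)
      have hJ : M₂.Indep (insert x Q) := h2.subset (insert_subset_insert hQTy)
      rw [hQindep.insert_indep_iff_of_notMem hxQ] at hJ
      exact hJ.2 (hclQ ▸ hxcl₂)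
    have hyB₁ : y ∉ B₁ := by
      intro hy
      have hPTy : P ⊆ T \ {y} := fun v hv => ⟨Or.inl hv,
        fun hvy => (by
          rcases hv with hv | hv
          · exact hxB₁ hy (hvy ▸ hv.1)
          · exact hB₁B₂ y hy (hvy ▸ hv))⟩
      have hxP : x' ∉ P := fun h => hx'T (Or.inl h)
      have hK : M₁.Indep (insert x' P) := h3.subset (insert_subset_insert hPTy)
      rw [hPindep.insert_indep_iff_of_notMem hxP] at hK
      exact hK.2 (hclP ▸ hx'cl₁)
    have hySA : y ∈ S \ A₁ := by
      rcases hyT with (hy | hy) | hy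
      · exact hy
      · exact absurd hy hyB₂
      · exact absurd hy hyB₁
    have hyS : y ∈ S := hySA.1
    -- J = insert x (Q \ {y}) is M₂-independent
    have hQyT : Q \ {y} ⊆ T \ {y} := diff_subset_diff_left hQT
    have hJind : M₂.Indep (insert x (Q \ {y})) :=
      h2.subset (insert_subset_insert hQyT)
    -- y is in layer 2
    have hyD₂ : InLayer M₁ M₂ S 2 y := by
      have hSy : M₂.Indep (S \ {y}) := hS₂.subset diff_subset
      have hxQy : x ∉ Q \ {y} := fun h => hxT (hQT h.1)
      have hyQ : y ∈ Q := Or.inl hySA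
      have hScard : 1 ≤ S.ncard := by
        rw [Nat.one_le_iff_ne_zero]
        intro h
        rw [(ncard_eq_zero hSfin).mp h] at hyS
        exact hyS
      have hlt : (S \ {y}).encard < (insert x (Q \ {y})).encard := by
        rw [← (hSfin.diff).cast_ncard_eq, ← ((hQfin.diff).insert _).cast_ncard_eq,
          Nat.cast_lt, ncard_insert_of_notMem hxQy (hQfin.diff),
          ncard_diff_singleton_of_mem hyS, ncard_diff_singleton_of_mem hyQ,
          hQcard]
        omega
      obtain ⟨e, heJ, heind⟩ := hSy.augment hJind hlt
      have heS : e ∉ S ∧ M₁.Indep (insert e S) := by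
        rcases mem_insert_iff.mp heJ.1 with rfl | he
        · exact ⟨hxS, hxi₁⟩
        · have heQ : e ∈ Q := he.1
          have hey : e ∉ ({y} : Set α) := he.2
          have heB₁ : e ∈ B₁ := by
            rcases heQ with h | h
            · exact absurd (show e ∈ S \ {y} from ⟨h.1, hey⟩) heJ.2
            · exact h
          exact hB₁S e heB₁
      exact inLayer_two_of hyS heS.1 heS.2 heind
    -- x' is in layer 3
    have hPyT : P \ {y} ⊆ T \ {y} := diff_subset_diff_left subset_union_left
    have hKind : M₁.Indep (insert x' (P \ {y})) := h3.subset (insert_subset_insert hPyT)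
    have hx'D₃ : InLayer M₁ M₂ S 3 x' := by
      have hsupp := mem_closure_support hS₁ hSfin hx'cl₁
      have hex : ∃ y', (y' ∈ S ∧ x' ∉ M₁.closure (S \ {y'})) ∧ (y' ∈ A₁ ∨ y' = y) := by
        by_contra hcon
        push_neg at hcon
        have hNP : {y₀ | y₀ ∈ S ∧ x' ∉ M₁.closure (S \ {y₀})} ⊆ P \ {y} := by
          rintro y₀ ⟨hy₀S, hy₀cl⟩
          obtain ⟨h1', h2'⟩ := hcon y₀ ⟨hy₀S, hy₀cl⟩
          exact ⟨Or.inl ⟨hy₀S, h1'⟩, h2'⟩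
        have hx'P : x' ∉ P \ {y} := fun h => hx'T (Or.inl h.1)
        have := hKind
        rw [(hPindep.subset diff_subset).insert_indep_iff_of_notMem hx'P] at this
        exact this.2 (M₁.closure_subset_closure hNP hsupp)
      obtain ⟨y', ⟨hy'S, hy'cl⟩, hy'A⟩ := hex
      have hy'ind : M₁.Indep (insert x' (S \ {y'})) := by
        rw [(hS₁.subset diff_subset).insert_indep_iff_of_notMem
          (fun h => hx'S h.1)]
        exact ⟨hx'E₁, hy'cl⟩
      have hy'L2 : InLayer M₁ M₂ S 2 y' := by
        rcases hy'A with h | rfl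
        · exact hA₁L y' h
        · exact hyD₂
      exact inLayer_three_of hx'S hx'ni₁ hy'S hy'L2 hy'ind
    -- x is in layer 1
    have hxD₁ : InLayer M₁ M₂ S 1 x := inLayer_one_iff.mpr ⟨hxS, hxi₁⟩
    -- build the bigger augmenting set
    have hxB₁' : x ∉ B₁ := fun h => hxT (Or.inr h)
    have hyA₁ : y ∉ A₁ := hySA.2
    have hx'B₂ : x' ∉ B₂ := fun h => hx'T (Or.inl (Or.inr h))
    have haug' : IsAugSet M₁ M₂ S (insert x B₁) (insert y A₁) (insert x' B₂) := by
      refine ⟨?_, ?_, ?_, ?_, ?_, ?_, ?_, ?_, ?_⟩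
      · intro v hv
        rcases mem_insert_iff.mp hv with rfl | hv
        · exact hxD₁
        · exact hB₁L v hv
      · intro v hv
        rcases mem_insert_iff.mp hv with rfl | hv
        · exact hyD₂
        · exact hA₁L v hv
      · intro v hv
        rcases mem_insert_iff.mp hv with rfl | hv
        · exact hx'D₃
        · exact hB₂L v hv
      · rw [ncard_insert_of_notMem hxB₁' hB₁fin, ncard_insert_of_notMem hyA₁ hA₁fin, hc₁]
      · rw [ncard_insert_of_notMem hyA₁ hA₁fin, ncard_insert_of_notMem hx'B₂ hB₂fin, hc₂]
      · have heq : S ∪ insert x B₁ = insert x (S ∪ B₁) := by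
          rw [union_insert]
        rw [heq, hI1.insert_indep_iff_of_notMem (fun h => hxT (by
          rcases h with h | h
          · exact absurd h hxS
          · exact Or.inr h))]
        exact ⟨hxE, fun h => hx1cl (by rw [hclT₁]; exact h)⟩
      · have heq : (S ∪ insert x B₁) \ insert y A₁ = insert x (Q \ {y}) := by
          ext v
          simp only [hQdef, mem_diff, mem_union, mem_insert_iff, mem_singleton_iff]
          constructor
          · rintro ⟨h1 | (rfl | h1), h2⟩
            · exact Or.inr ⟨Or.inl ⟨h1, fun h => h2 (Or.inr h)⟩, fun h => h2 (Or.inl h)⟩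
            · exact Or.inl rfl
            · exact Or.inr ⟨Or.inr h1, fun h => hxB₁ h1 (h ▸ hyS)⟩
          · rintro (rfl | ⟨h1 | h1, h2⟩)
            · exact ⟨Or.inr (Or.inl rfl), fun h => (by
                rcases h with h | h
                · exact hxS (h ▸ hyS)
                · exact hxS (hA₁S h))⟩
            · exact ⟨Or.inl h1.1, fun h => (by
                rcases h with h | h
                · exact h2 h
                · exact h1.2 h)⟩
            · exact ⟨Or.inr (Or.inr h1), fun h => (by
                rcases h with h | h
                · exact h2 h
                · exact hxB₁ h1 (hA₁S h))⟩
        rw [heq]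
        exact hJind
      · have heq : (S \ insert y A₁) ∪ insert x' B₂ = insert x' (P \ {y}) := by
          ext v
          simp only [hPdef, mem_diff, mem_union, mem_insert_iff, mem_singleton_iff]
          constructor
          · rintro (⟨h1, h2⟩ | (rfl | h1))
            · exact Or.inr ⟨Or.inl ⟨h1, fun h => h2 (Or.inr h)⟩, fun h => h2 (Or.inl h)⟩
            · exact Or.inl rfl
            · exact Or.inr ⟨Or.inr h1, fun h => hB₂S v h1 (h ▸ hyS)⟩
          · rintro (rfl | ⟨h1 | h1, h2⟩)
            · exact Or.inr (Or.inl rfl)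
            · exact Or.inl ⟨h1.1, fun h => (by
                rcases h with h | h
                · exact h2 h
                · exact h1.2 h)⟩
            · exact Or.inr (Or.inr h1)
        rw [heq]
        exact hKind
      · have heq : S ∪ insert x' B₂ = insert x' (S ∪ B₂) := by
          rw [union_insert]
        rw [heq, hI4.insert_indep_iff_of_notMem (fun h => (by
          rcases h with h | h
          · exact hx'S h
          · exact hx'B₂ h))]
        exact ⟨hx'E, fun h => hx'2cl (by rw [hclT₂]; exact h)⟩
    obtain ⟨hBeq, -, -⟩ := hmax _ _ _ haug' (subset_insert _ _) (subset_insert _ _)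
      (subset_insert _ _)
    exact hxB₁' (hBeq ▸ mem_insert x B₁)
  -- Final counting argument (Cunningham bound for distance ≥ 6)
  obtain ⟨⟨Tm, hTm₁, hTm₂, hTmcard⟩, hub⟩ := hr
  have hTmE : Tm ⊆ M₁.E := hTm₁.subset_ground
  have hTmfin : Tm.Finite := hfin.subset hTmE
  have hTU₁ : T ∪ Tm ⊆ M₁.E := union_subset hTE₁ hTmE
  have hTU₂ : T ∪ Tm ⊆ M₂.E := union_subset hTE₂ (hE ▸ hTmE)
  -- X from a basis of T ∪ Tm in M₁ containing T
  obtain ⟨B, hB, hTB⟩ := hT₁.subset_isBasis_of_subset subset_union_left hTU₁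
  have hBfin : B.Finite := hfin.subset hB.indep.subset_ground
  have hTmB : Tm.encard ≤ B.encard := by
    refine indep_encard_le_of_subset_closure hTm₁ ?_ hB.indep.subset_ground
    rw [hB.closure_eq_closure]
    exact fun v hv => M₁.subset_closure _ hTU₁ (Or.inr hv)
  obtain ⟨B', hB', hTB'⟩ := hT₂.subset_isBasis_of_subset subset_union_left hTU₂
  have hB'fin : B'.Finite := (hfin.subset (hE ▸ hB'.indep.subset_ground : B' ⊆ M₁.E))
  have hTmB' : Tm.encard ≤ B'.encard := by
    refine indep_encard_le_of_subset_closure hTm₂ ?_ hB'.indep.subset_ground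
    rw [hB'.closure_eq_closure]
    exact fun v hv => M₂.subset_closure _ hTU₂ (Or.inr hv)
  set X := B \ T with hXdef
  set Y := B' \ T with hYdef
  have hXfin : X.Finite := hBfin.diff
  have hYfin : Y.Finite := hB'fin.diff
  have hXTm : X ⊆ Tm := fun v hv => (hB.subset hv.1).resolve_left hv.2
  have hYTm : Y ⊆ Tm := fun v hv => (hB'.subset hv.1).resolve_left hv.2
  have hXins : ∀ x ∈ X, M₁.Indep (insert x T) :=
    fun x hx => hB.indep.subset (insert_subset hx.1 hTB)
  have hYins : ∀ y ∈ Y, M₂.Indep (insert y T) :=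
    fun y hy => hB'.indep.subset (insert_subset hy.1 hTB')
  have hrX : r ≤ T.ncard + X.ncard := by
    have hBcard : B.ncard = T.ncard + X.ncard := by
      rw [hXdef, ncard_diff hTB hTfin]
      have := ncard_le_ncard hTB hBfin
      omega
    have : Tm.ncard ≤ B.ncard := by
      rw [← Nat.cast_le (α := ℕ∞), hTmfin.cast_ncard_eq, hBfin.cast_ncard_eq]
      exact hTmB
    omega
  have hrY : r ≤ T.ncard + Y.ncard := by
    have hBcard : B'.ncard = T.ncard + Y.ncard := by
      rw [hYdef, ncard_diff hTB' hTfin]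
      have := ncard_le_ncard hTB' hB'fin
      omega
    have : Tm.ncard ≤ B'.ncard := by
      rw [← Nat.cast_le (α := ℕ∞), hTmfin.cast_ncard_eq, hB'fin.cast_ncard_eq]
      exact hTmB'
    omega
  -- X and Y are disjoint
  have hXY : ∀ v, v ∈ X → v ∈ Y → False := fun v hvX hvY =>
    hTmax v hvX.2 (hXins v hvX) (hYins v hvY)
  -- Z and Z'
  set Z := {y | y ∈ T ∧ ∃ x ∈ X, M₂.Indep (insert x (T \ {y}))} with hZdef
  set Z' := {y | y ∈ T ∧ ∃ x ∈ Y, M₁.Indep (insert x (T \ {y}))} with hZ'def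
  have hZT : Z ⊆ T := fun y hy => hy.1
  have hZ'T : Z' ⊆ T := fun y hy => hy.1
  have hZfin : Z.Finite := hTfin.subset hZT
  have hZ'fin : Z'.Finite := hTfin.subset hZ'T
  have hZZ' : ∀ v, v ∈ Z → v ∈ Z' → False := by
    rintro v ⟨hvT, x, hxX, hx2⟩ ⟨-, x', hx'Y, hx'1⟩
    exact hTpath x v x' hxX.2 hx'Y.2 hvT (hXins x hxX) hx2 hx'1 (hYins x' hx'Y)
  have hXZ : X.ncard ≤ Z.ncard := by
    rw [← Nat.cast_le (α := ℕ∞), hXfin.cast_ncard_eq, hZfin.cast_ncard_eq]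
    refine indep_encard_le_of_subset_closure (hTm₂.subset hXTm) ?_ (hZT.trans hTE₂)
    intro x hx
    have hxE₂ : x ∈ M₂.E := hE ▸ hTmE (hXTm hx)
    have hxcl : x ∈ M₂.closure T := by
      have hni : ¬ M₂.Indep (insert x T) := fun h => hTmax x hx.2 (hXins x hx) h
      rw [hT₂.insert_indep_iff_of_notMem hx.2] at hni
      simp only [mem_diff, not_and, not_not] at hni
      exact hni hxE₂
    have hsupp := mem_closure_support hT₂ hTfin hxcl
    refine M₂.closure_subset_closure ?_ hsupp
    rintro y ⟨hyT, hycl⟩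
    refine ⟨hyT, x, hx, ?_⟩
    rw [(hT₂.subset diff_subset).insert_indep_iff_of_notMem (fun h => hx.2 h.1)]
    exact ⟨hxE₂, hycl⟩
  have hYZ' : Y.ncard ≤ Z'.ncard := by
    rw [← Nat.cast_le (α := ℕ∞), hYfin.cast_ncard_eq, hZ'fin.cast_ncard_eq]
    refine indep_encard_le_of_subset_closure (hTm₁.subset hYTm) ?_ (hZ'T.trans hTE₁)
    intro x hx
    have hxE₁ : x ∈ M₁.E := hTmE (hYTm hx)
    have hxcl : x ∈ M₁.closure T := by
      have hni : ¬ M₁.Indep (insert x T) := fun h => hTmax x hx.2 h (hYins x hx)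
      rw [hT₁.insert_indep_iff_of_notMem hx.2] at hni
      simp only [mem_diff, not_and, not_not] at hni
      exact hni hxE₁
    have hsupp := mem_closure_support hT₁ hTfin hxcl
    refine M₁.closure_subset_closure ?_ hsupp
    rintro y ⟨hyT, hycl⟩
    refine ⟨hyT, x, hx, ?_⟩
    rw [(hT₁.subset diff_subset).insert_indep_iff_of_notMem (fun h => hx.2 h.1)]
    exact ⟨hxE₁, hycl⟩
  have hZZ'T : Z.ncard + Z'.ncard ≤ T.ncard := by
    rw [← ncard_union_eq (disjoint_left.mpr fun a ha hb => hZZ' a ha hb) hZfin hZ'fin]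
    exact ncard_le_ncard (union_subset hZT hZ'T) hTfin
  have hfinal : 2 * r ≤ 3 * T.ncard := by omega
  rw [div_mul_eq_mul_div, div_le_iff₀ (by norm_num : (0:ℚ) < 3)]
  push_cast
  have : ((2 * r : ℕ) : ℚ) ≤ ((3 * T.ncard : ℕ) : ℚ) := Nat.cast_le.mpr hfinal
  push_cast at this
  linarith
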